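/- Let p ∈ (1,∞) and δ ≥ 0 (change of shift for conjugate functions). For every ε ∈ (0,1) there exists a constant c_ε > 0 depending only on p and ε such that for all 3×3 real matrices P, Q and all t ≥ 0 one has both (φ_{|P|})*(t) ≤ c_ε·(φ_{|Q|})*(t) + ε·φ_{|P|}(|P−Q|) and (φ_{|P|})*(t) ≤ c_ε·(φ_{|Q|})*(t) + ε·φ_{|Q|}(|P−Q|), where (φ_a)* denotes the convex conjugate of φ_a and |·| the Frobenius norm. -/

import Mathlib

set_option maxHeartbeats 1000000

/-- The derivative `φ'(t) = (δ+t)^(p-2)·t` of the N-function `φ = φ_{p,δ}`. -/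
noncomputable def phiDeriv (p δ t : ℝ) : ℝ := (δ + t) ^ (p - 2) * t

/-- The shifted N-function `φ_a(t) = ∫₀ᵗ φ'(a+s)·s/(a+s) ds`. -/
noncomputable def phiShift (p δ a t : ℝ) : ℝ :=
  ∫ s in (0:ℝ)..t, phiDeriv p δ (a + s) * s / (a + s)

/-- The convex conjugate of an N-function: `ψ*(s) = sup_{t ≥ 0} (s·t − ψ(t))`. -/
noncomputable def conjFun (ψ : ℝ → ℝ) (s : ℝ) : ℝ :=
  sSup ((fun t => s * t - ψ t) '' Set.Ici 0)

/-- The Frobenius norm of a 3×3 real matrix. -/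
noncomputable def frob (P : Matrix (Fin 3) (Fin 3) ℝ) : ℝ :=
  Real.sqrt (∑ i, ∑ j, (P i j) ^ 2)

open MeasureTheory Set

namespace SCC

noncomputable def Phi (p A t : ℝ) : ℝ := ∫ s in (0:ℝ)..t, (A + s) ^ (p - 2) * s

variable {p : ℝ}

lemma F_nonneg {A s : ℝ} (hA : 0 ≤ A) (hs : 0 ≤ s) : 0 ≤ (A + s) ^ (p - 2) * s :=
  mul_nonneg (Real.rpow_nonneg (by linarith) _) hs

lemma F_rw {A s : ℝ} (hA : 0 ≤ A) (hs : 0 ≤ s) :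
    (A + s) ^ (p - 2) * s = (A + s) ^ (p - 1) * (s / (A + s)) := by
  rcases eq_or_lt_of_le (by linarith : (0:ℝ) ≤ A + s) with h | h
  · have hs0 : s = 0 := by linarith [le_of_eq h.symm]
    simp [hs0]
  · have hne : A + s ≠ 0 := ne_of_gt h
    rw [show p - 2 = p - 1 - 1 by ring, Real.rpow_sub h, Real.rpow_one]
    field_simp

lemma F_mono (hp : 1 < p) {A : ℝ} (hA : 0 ≤ A) :
    MonotoneOn (fun s => (A + s) ^ (p - 2) * s) (Set.Ici 0) := by
  intro x hx y hy hxy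
  simp only [Set.mem_Ici] at hx hy
  simp only
  rw [F_rw hA hx, F_rw hA hy]
  have h1 : (A + x) ^ (p - 1) ≤ (A + y) ^ (p - 1) :=
    Real.rpow_le_rpow (by linarith) (by linarith) (by linarith)
  have h2 : x / (A + x) ≤ y / (A + y) := by
    rcases eq_or_lt_of_le (by linarith : (0:ℝ) ≤ A + x) with h | h
    · have hx0 : x = 0 := by linarith [le_of_eq h.symm]
      simp only [hx0, zero_div]
      exact div_nonneg hy (by linarith)
    · rw [div_le_div_iff₀ h (by linarith)]
      nlinarith
  exact mul_le_mul h1 h2 (div_nonneg hx (by linarith)) (Real.rpow_nonneg (by linarith) _)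

lemma F_int (hp : 1 < p) {A : ℝ} (hA : 0 ≤ A) {x y : ℝ} (hx : 0 ≤ x) (hy : 0 ≤ y) :
    IntervalIntegrable (fun s => (A + s) ^ (p - 2) * s) volume x y := by
  apply MonotoneOn.intervalIntegrable
  apply (F_mono hp hA).mono
  intro z hz
  rw [Set.mem_uIcc] at hz
  rw [Set.mem_Ici]
  rcases hz with ⟨h1, _⟩ | ⟨h1, _⟩ <;> linarith

lemma Phi_zero {A : ℝ} : Phi p A 0 = 0 := intervalIntegral.integral_same

lemma Phi_nonneg {A t : ℝ} (hA : 0 ≤ A) (ht : 0 ≤ t) : 0 ≤ Phi p A t :=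
  intervalIntegral.integral_nonneg ht fun u hu => F_nonneg hA hu.1

lemma Phi_upper (hp : 1 < p) {A t : ℝ} (hA : 0 ≤ A) (ht : 0 ≤ t) :
    Phi p A t ≤ (A + t) ^ (p - 2) * t * t := by
  have h : Phi p A t ≤ ∫ _ in (0:ℝ)..t, (A + t) ^ (p - 2) * t := by
    apply intervalIntegral.integral_mono_on ht (F_int hp hA le_rfl ht) intervalIntegrable_const
    intro x hx
    exact F_mono hp hA (Set.mem_Ici.mpr hx.1) (Set.mem_Ici.mpr ht) hx.2
  calc Phi p A t ≤ ∫ _ in (0:ℝ)..t, (A + t) ^ (p - 2) * t := h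
  _ = (A + t) ^ (p - 2) * t * t := by
      rw [intervalIntegral.integral_const, smul_eq_mul]; ring

lemma Phi_half (hp : 1 < p) {A t : ℝ} (hA : 0 ≤ A) (ht : 0 ≤ t) :
    (A + t / 2) ^ (p - 2) * (t / 2) * (t / 2) ≤ Phi p A t := by
  have h2 : (0:ℝ) ≤ t / 2 := by linarith
  have hsplit : Phi p A t =
      (∫ s in (0:ℝ)..(t/2), (A + s) ^ (p - 2) * s) + ∫ s in (t/2)..t, (A + s) ^ (p - 2) * s :=
    (intervalIntegral.integral_add_adjacent_intervals (F_int hp hA le_rfl h2)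
      (F_int hp hA h2 ht)).symm
  have h1 : 0 ≤ ∫ s in (0:ℝ)..(t/2), (A + s) ^ (p - 2) * s :=
    intervalIntegral.integral_nonneg h2 fun u hu => F_nonneg hA hu.1
  have h3 : (∫ _ in (t/2)..t, (A + t/2) ^ (p - 2) * (t/2)) ≤
      ∫ s in (t/2)..t, (A + s) ^ (p - 2) * s := by
    apply intervalIntegral.integral_mono_on (by linarith) intervalIntegrable_const
      (F_int hp hA h2 ht)
    intro x hx
    exact F_mono hp hA (Set.mem_Ici.mpr h2) (Set.mem_Ici.mpr (by linarith [hx.1])) hx.1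
  have h4 : (∫ _ in (t/2)..t, (A + t/2) ^ (p - 2) * (t/2)) =
      (A + t/2) ^ (p - 2) * (t/2) * (t/2) := by
    rw [intervalIntegral.integral_const, smul_eq_mul]; ring
  rw [hsplit]; rw [h4] at h3; linarith

lemma Phi_lower (hp : 1 < p) {A t : ℝ} (hA : 0 ≤ A) (ht : 0 ≤ t) :
    min (1:ℝ) (2 ^ (2 - p)) / 4 * ((A + t) ^ (p - 2) * t * t) ≤ Phi p A t := by
  rcases eq_or_lt_of_le ht with ht0 | ht0
  · rw [← ht0, Phi_zero]; ring_nf; simp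
  have key : min (1:ℝ) (2 ^ (2 - p)) * (A + t) ^ (p - 2) ≤ (A + t/2) ^ (p - 2) := by
    rcases le_or_gt 2 p with h2 | h2
    · have e1 : (2:ℝ) ^ (2 - p) * (A + t) ^ (p - 2) = ((A + t) / 2) ^ (p - 2) := by
        rw [Real.div_rpow (by linarith) (by norm_num), show (2:ℝ) - p = -(p - 2) by ring,
          Real.rpow_neg (by norm_num : (0:ℝ) ≤ 2)]
        rw [inv_mul_eq_div]
      have e2 : ((A + t) / 2) ^ (p - 2) ≤ (A + t/2) ^ (p - 2) :=
        Real.rpow_le_rpow (by linarith) (by linarith) (by linarith)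
      calc min (1:ℝ) (2 ^ (2 - p)) * (A + t) ^ (p - 2)
          ≤ 2 ^ (2 - p) * (A + t) ^ (p - 2) :=
            mul_le_mul_of_nonneg_right (min_le_right _ _) (Real.rpow_nonneg (by linarith) _)
      _ = ((A + t) / 2) ^ (p - 2) := e1
      _ ≤ _ := e2
    · have e2 : (A + t) ^ (p - 2) ≤ (A + t/2) ^ (p - 2) :=
        Real.rpow_le_rpow_of_nonpos (by linarith) (by linarith) (by linarith)
      calc min (1:ℝ) (2 ^ (2 - p)) * (A + t) ^ (p - 2)
          ≤ 1 * (A + t) ^ (p - 2) :=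
            mul_le_mul_of_nonneg_right (min_le_left _ _) (Real.rpow_nonneg (by linarith) _)
      _ = (A + t) ^ (p - 2) := one_mul _
      _ ≤ _ := e2
  have hh := Phi_half hp hA ht
  nlinarith [mul_le_mul_of_nonneg_right key
    (mul_nonneg (by linarith : (0:ℝ) ≤ t/2) (by linarith : (0:ℝ) ≤ t/2))]

lemma Phi_hom (hp : 1 < p) {A t γ : ℝ} (hA : 0 ≤ A) (ht : 0 ≤ t) (hγ : 1 ≤ γ) :
    γ ^ (min p 2) * Phi p A t ≤ Phi p A (γ * t) := by
  have hγ0 : (0:ℝ) < γ := by linarith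
  set q := min p 2 with hqdef
  -- pointwise inequality
  have hpt : ∀ x ∈ Set.Icc (0:ℝ) t,
      γ ^ (q - 1) * ((A + x) ^ (p - 2) * x) ≤ (A + γ * x) ^ (p - 2) * (γ * x) := by
    intro x hx
    rcases eq_or_lt_of_le hx.1 with hx0 | hx0
    · simp [← hx0]
    rcases le_or_gt 2 p with h2 | h2
    · have hq2 : q = 2 := min_eq_right h2
      have hγ1 : γ ^ (q - 1) = γ := by rw [hq2]; norm_num
      have hb : (A + x) ^ (p - 2) ≤ (A + γ * x) ^ (p - 2) :=
        Real.rpow_le_rpow (by linarith) (by nlinarith) (by linarith)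
      rw [hγ1]
      nlinarith [mul_le_mul_of_nonneg_right hb (mul_nonneg hγ0.le hx.1)]
    · have hqp : q = p := min_eq_left (by linarith)
      have hb : (γ * (A + x)) ^ (p - 2) ≤ (A + γ * x) ^ (p - 2) :=
        Real.rpow_le_rpow_of_nonpos (by nlinarith) (by nlinarith) (by linarith)
      have hb2 : (γ * (A + x)) ^ (p - 2) = γ ^ (p - 2) * (A + x) ^ (p - 2) :=
        Real.mul_rpow hγ0.le (by linarith)
      have hγsplit : γ ^ (q - 1) = γ ^ (p - 2) * γ := by
        rw [hqp, show p - 1 = p - 2 + 1 by ring, Real.rpow_add_one (ne_of_gt hγ0)]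
      rw [hγsplit]
      have := mul_le_mul_of_nonneg_right (hb2 ▸ hb) (mul_nonneg hγ0.le hx.1)
      nlinarith [this]
  -- change of variables
  have hchg : (∫ x in (0:ℝ)..t, (A + γ * x) ^ (p - 2) * (γ * x)) = γ⁻¹ * Phi p A (γ * t) := by
    have h := intervalIntegral.integral_comp_mul_left
      (f := fun s => (A + s) ^ (p - 2) * s) (a := (0:ℝ)) (b := t) (ne_of_gt hγ0)
    simpa [Phi, smul_eq_mul] using h
  have hm2 : MonotoneOn (fun x => (A + γ * x) ^ (p - 2) * (γ * x)) (Set.uIcc 0 t) := by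
    intro x hx y hy hxy
    rw [Set.uIcc_of_le ht] at hx hy
    exact F_mono hp hA (Set.mem_Ici.mpr (mul_nonneg hγ0.le hx.1))
      (Set.mem_Ici.mpr (mul_nonneg hγ0.le hy.1)) (by nlinarith)
  have hint2 : IntervalIntegrable (fun x => (A + γ * x) ^ (p - 2) * (γ * x)) volume 0 t :=
    hm2.intervalIntegrable
  have hmono : (∫ x in (0:ℝ)..t, γ ^ (q - 1) * ((A + x) ^ (p - 2) * x)) ≤
      ∫ x in (0:ℝ)..t, (A + γ * x) ^ (p - 2) * (γ * x) :=
    intervalIntegral.integral_mono_on ht ((F_int hp hA le_rfl ht).const_mul _) hint2 hpt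
  have hlhs : (∫ x in (0:ℝ)..t, γ ^ (q - 1) * ((A + x) ^ (p - 2) * x)) =
      γ ^ (q - 1) * Phi p A t := intervalIntegral.integral_const_mul _ _
  have hγq : γ ^ q = γ * γ ^ (q - 1) := by
    have h' : γ ^ (q - 1) * γ = γ ^ (q - 1 + 1) := (Real.rpow_add_one (ne_of_gt hγ0) _).symm
    have h'' : γ ^ (q - 1 + 1) = γ ^ q := by congr 1; ring
    rw [← h'', ← h']; ring
  calc γ ^ q * Phi p A t = γ * (γ ^ (q - 1) * Phi p A t) := by rw [hγq]; ring
  _ ≤ γ * ∫ x in (0:ℝ)..t, (A + γ * x) ^ (p - 2) * (γ * x) := by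
      rw [← hlhs]; exact mul_le_mul_of_nonneg_left hmono hγ0.le
  _ = Phi p A (γ * t) := by
      rw [hchg, ← mul_assoc, mul_inv_cancel₀ (ne_of_gt hγ0), one_mul]

lemma Phi_scale (hp : 1 < p) {A u θ : ℝ} (hA : 0 ≤ A) (hu : 0 ≤ u) (hθ0 : 0 < θ)
    (hθ1 : θ ≤ 1) : Phi p A (θ * u) ≤ θ ^ (min p 2) * Phi p A u := by
  have hγ : 1 ≤ θ⁻¹ := by
    nlinarith [mul_inv_cancel₀ (ne_of_gt hθ0), inv_nonneg.mpr hθ0.le]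
  have h := Phi_hom hp hA (mul_nonneg hθ0.le hu) hγ
  rw [show θ⁻¹ * (θ * u) = u by
    rw [← mul_assoc, inv_mul_cancel₀ (ne_of_gt hθ0), one_mul]] at h
  rw [Real.inv_rpow hθ0.le] at h
  have hpos : (0:ℝ) < θ ^ (min p 2) := Real.rpow_pos_of_pos hθ0 _
  have h2 := mul_le_mul_of_nonneg_left h hpos.le
  rw [← mul_assoc, mul_inv_cancel₀ (ne_of_gt hpos), one_mul] at h2
  exact h2

lemma Phi_coercive (hp : 1 < p) {A t u : ℝ} (hA : 0 ≤ A) (ht : 0 ≤ t)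
    (hu : 2 * A + 2 * (4 * t) ^ (1 / (p - 1)) ≤ u) : t * u ≤ Phi p A u := by
  have hR : 0 ≤ (4 * t) ^ (1 / (p - 1)) := Real.rpow_nonneg (by linarith) _
  have hu0 : 0 ≤ u := by linarith
  rcases eq_or_lt_of_le hu0 with h0 | h0
  · rw [← h0, Phi_zero]; simp
  have hhalfpos : 0 < u / 2 := by linarith
  have hF : 4 * t ≤ (u / 2) ^ (p - 1) := by
    have hle : (4 * t) ^ (1 / (p - 1)) ≤ u / 2 := by linarith
    have e : 1 / (p - 1) * (p - 1) = 1 :=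
      one_div_mul_cancel (ne_of_gt (by linarith : (0:ℝ) < p - 1))
    calc 4 * t = ((4 * t) ^ (1 / (p - 1))) ^ (p - 1) := by
          rw [← Real.rpow_mul (by linarith : (0:ℝ) ≤ 4 * t), e, Real.rpow_one]
    _ ≤ (u / 2) ^ (p - 1) := Real.rpow_le_rpow hR hle (by linarith)
  have hlow : 1 / 2 * (u / 2) ^ (p - 2) ≤ (A + u / 2) ^ (p - 2) := by
    rcases le_or_gt 2 p with h2 | h2
    · have h := Real.rpow_le_rpow (z := p - 2) hhalfpos.le
        (by linarith : u / 2 ≤ A + u / 2) (by linarith)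
      nlinarith [Real.rpow_nonneg hhalfpos.le (p - 2)]
    · have hb : (2 * (u / 2)) ^ (p - 2) ≤ (A + u / 2) ^ (p - 2) :=
        Real.rpow_le_rpow_of_nonpos (by linarith) (by linarith) (by linarith)
      have hb2 : (2 * (u / 2)) ^ (p - 2) = 2 ^ (p - 2) * (u / 2) ^ (p - 2) :=
        Real.mul_rpow (by norm_num) hhalfpos.le
      have hb3 : (1 / 2 : ℝ) ≤ 2 ^ (p - 2) := by
        have h := Real.rpow_le_rpow_of_exponent_le (by norm_num : (1:ℝ) ≤ 2)
          (by linarith : (-1:ℝ) ≤ p - 2)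
        rw [Real.rpow_neg_one] at h
        nlinarith
      nlinarith [Real.rpow_nonneg hhalfpos.le (p - 2)]
  have hsp : (u / 2) ^ (p - 2) * (u / 2) = (u / 2) ^ (p - 1) := by
    rw [show p - 1 = p - 2 + 1 by ring, Real.rpow_add_one (ne_of_gt hhalfpos)]
  have hkey : t * u ≤ (A + u / 2) ^ (p - 2) * (u / 2) * (u / 2) := by
    have step1 : 4 * t * (1 / 2) * (u / 2) ≤ (u / 2) ^ (p - 1) * (1 / 2) * (u / 2) := by
      nlinarith
    have step2 : 1 / 2 * (u / 2) ^ (p - 2) * (u / 2) * (u / 2) ≤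
        (A + u / 2) ^ (p - 2) * (u / 2) * (u / 2) := by
      nlinarith [mul_le_mul_of_nonneg_right hlow
        (mul_nonneg hhalfpos.le hhalfpos.le)]
    calc t * u = 4 * t * (1 / 2) * (u / 2) := by ring
    _ ≤ (u / 2) ^ (p - 1) * (1 / 2) * (u / 2) := step1
    _ = 1 / 2 * (u / 2) ^ (p - 2) * (u / 2) * (u / 2) := by rw [← hsp]; ring
    _ ≤ (A + u / 2) ^ (p - 2) * (u / 2) * (u / 2) := step2
  exact hkey.trans (Phi_half hp hA hu0)

lemma conj_bdd (hp : 1 < p) {A t : ℝ} (hA : 0 ≤ A) (ht : 0 ≤ t) :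
    BddAbove ((fun u => t * u - Phi p A u) '' Set.Ici 0) := by
  have hR : 0 ≤ (4 * t) ^ (1 / (p - 1)) := Real.rpow_nonneg (by linarith) _
  have hu₀ : 0 ≤ 2 * A + 2 * (4 * t) ^ (1 / (p - 1)) := by linarith
  refine ⟨t * (2 * A + 2 * (4 * t) ^ (1 / (p - 1))), ?_⟩
  rintro z ⟨u, hu, rfl⟩
  simp only [Set.mem_Ici] at hu
  show t * u - Phi p A u ≤ t * (2 * A + 2 * (4 * t) ^ (1 / (p - 1)))
  rcases le_or_gt u (2 * A + 2 * (4 * t) ^ (1 / (p - 1))) with h | h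
  · have h1 := Phi_nonneg (p := p) hA hu
    nlinarith [mul_le_mul_of_nonneg_left h ht]
  · have h1 := Phi_coercive hp hA ht (le_of_lt h)
    nlinarith [mul_nonneg ht hu₀]

lemma conj_young (hp : 1 < p) {A t u : ℝ} (hA : 0 ≤ A) (ht : 0 ≤ t) (hu : 0 ≤ u) :
    t * u - Phi p A u ≤ conjFun (Phi p A) t :=
  le_csSup (conj_bdd hp hA ht) ⟨u, Set.mem_Ici.mpr hu, rfl⟩

lemma conj_nonneg (hp : 1 < p) {A t : ℝ} (hA : 0 ≤ A) (ht : 0 ≤ t) :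
    0 ≤ conjFun (Phi p A) t := by
  have h := conj_young hp hA ht (le_refl 0)
  simpa [Phi_zero] using h

lemma conj_scale (hp : 1 < p) {A t l : ℝ} (hA : 0 ≤ A) (ht : 0 ≤ t) (hl : 1 ≤ l) :
    conjFun (Phi p A) (l * t) ≤ l ^ (min p 2 / (min p 2 - 1)) * conjFun (Phi p A) t := by
  have hq1 : 1 < min p 2 := lt_min hp one_lt_two
  have hl0 : 0 < l := by linarith
  have hγ1 : 1 ≤ l ^ (1 / (min p 2 - 1)) :=
    Real.one_le_rpow hl (le_of_lt (div_pos one_pos (by linarith)))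
  have hγ0 : 0 < l ^ (1 / (min p 2 - 1)) := by linarith
  have hγpow : (l ^ (1 / (min p 2 - 1))) ^ (min p 2 - 1) = l := by
    rw [← Real.rpow_mul hl0.le, one_div,
      inv_mul_cancel₀ (by linarith : min p 2 - 1 ≠ 0), Real.rpow_one]
  have hγq : (l ^ (1 / (min p 2 - 1))) ^ (min p 2) = l ^ (min p 2 / (min p 2 - 1)) := by
    rw [← Real.rpow_mul hl0.le]
    congr 1
    field_simp
  apply csSup_le ((Set.nonempty_Ici).image _)
  rintro z ⟨u, hu, rfl⟩
  simp only [Set.mem_Ici] at hu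
  show l * t * u - Phi p A u ≤ l ^ (min p 2 / (min p 2 - 1)) * conjFun (Phi p A) t
  have hv0 : 0 ≤ u / l ^ (1 / (min p 2 - 1)) := div_nonneg hu hγ0.le
  have huv : l ^ (1 / (min p 2 - 1)) * (u / l ^ (1 / (min p 2 - 1))) = u := by
    rw [mul_comm, div_mul_cancel₀ _ (ne_of_gt hγ0)]
  have h1 := Phi_hom (γ := l ^ (1 / (min p 2 - 1))) hp hA hv0 hγ1
  rw [huv] at h1
  have h2 : t * (u / l ^ (1 / (min p 2 - 1))) - Phi p A (u / l ^ (1 / (min p 2 - 1))) ≤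
      conjFun (Phi p A) t := conj_young hp hA ht hv0
  have hgq : (l ^ (1 / (min p 2 - 1))) ^ (min p 2) = l * l ^ (1 / (min p 2 - 1)) := by
    calc (l ^ (1 / (min p 2 - 1))) ^ (min p 2)
        = (l ^ (1 / (min p 2 - 1))) ^ (min p 2 - 1 + 1) := by congr 1; ring
    _ = (l ^ (1 / (min p 2 - 1))) ^ (min p 2 - 1) * l ^ (1 / (min p 2 - 1)) :=
        Real.rpow_add_one (ne_of_gt hγ0) _
    _ = l * l ^ (1 / (min p 2 - 1)) := by rw [hγpow]
  have h3 : l * u = (l ^ (1 / (min p 2 - 1))) ^ (min p 2) * (u / l ^ (1 / (min p 2 - 1))) := by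
    rw [hgq, mul_assoc, huv]
  calc l * t * u - Phi p A u
      = (l ^ (1 / (min p 2 - 1))) ^ (min p 2) *
          (t * (u / l ^ (1 / (min p 2 - 1)))) - Phi p A u := by
        rw [show l * t * u = t * (l * u) by ring, h3]; ring
  _ ≤ (l ^ (1 / (min p 2 - 1))) ^ (min p 2) *
          (t * (u / l ^ (1 / (min p 2 - 1)))) -
        (l ^ (1 / (min p 2 - 1))) ^ (min p 2) * Phi p A (u / l ^ (1 / (min p 2 - 1))) := by
        linarith
  _ = (l ^ (1 / (min p 2 - 1))) ^ (min p 2) *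
        (t * (u / l ^ (1 / (min p 2 - 1))) - Phi p A (u / l ^ (1 / (min p 2 - 1)))) := by
        ring
  _ ≤ (l ^ (1 / (min p 2 - 1))) ^ (min p 2) * conjFun (Phi p A) t :=
        mul_le_mul_of_nonneg_left h2 (Real.rpow_nonneg hγ0.le _)
  _ = l ^ (min p 2 / (min p 2 - 1)) * conjFun (Phi p A) t := by rw [hγq]

lemma G_shift (hp : 1 < p) {A B d v : ℝ} (hA : 0 ≤ A) (hB : 0 ≤ B) (hd : 0 ≤ d)
    (hab : |A - B| ≤ d) (hv : 0 ≤ v) :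
    (B + v) ^ (p - 2) * v * v ≤
      (3:ℝ) ^ |p - 2| * ((A + v) ^ (p - 2) * v * v + (A + d) ^ (p - 2) * d * d) := by
  have habs := abs_le.mp hab
  have hC1 : (1:ℝ) ≤ 3 ^ |p - 2| := Real.one_le_rpow (by norm_num) (abs_nonneg _)
  have hGv : 0 ≤ (A + v) ^ (p - 2) * v * v := mul_nonneg (F_nonneg hA hv) hv
  have hGd : 0 ≤ (A + d) ^ (p - 2) * d * d := mul_nonneg (F_nonneg hA hd) hd
  rcases eq_or_lt_of_le hv with hv0 | hv0
  · rw [← hv0]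
    simp only [mul_zero]
    nlinarith
  rcases le_or_gt 2 p with h2 | h2
  · have hCe : (2:ℝ) ^ (p - 2) ≤ 3 ^ |p - 2| := by
      rw [abs_of_nonneg (by linarith : (0:ℝ) ≤ p - 2)]
      exact Real.rpow_le_rpow (by norm_num) (by norm_num) (by linarith)
    rcases le_or_gt d (A + v) with hcase | hcase
    · have hBv : B + v ≤ 2 * (A + v) := by linarith
      have h1 : (B + v) ^ (p - 2) ≤ 2 ^ (p - 2) * (A + v) ^ (p - 2) := by
        calc (B + v) ^ (p - 2) ≤ (2 * (A + v)) ^ (p - 2) :=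
              Real.rpow_le_rpow (by linarith) hBv (by linarith)
        _ = _ := Real.mul_rpow (by norm_num) (by linarith)
      have t1 := mul_le_mul_of_nonneg_right h1 (mul_nonneg hv hv)
      have t2 := mul_le_mul_of_nonneg_right hCe hGv
      have t3 : 0 ≤ (3:ℝ) ^ |p - 2| * ((A + d) ^ (p - 2) * d * d) :=
        mul_nonneg (by linarith) hGd
      nlinarith [t1, t2, t3]
    · have hvd : v ≤ d := by linarith
      have hBv : B + v ≤ 2 * (A + d) := by linarith
      have h1 : (B + v) ^ (p - 2) ≤ 2 ^ (p - 2) * (A + d) ^ (p - 2) := by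
        calc (B + v) ^ (p - 2) ≤ (2 * (A + d)) ^ (p - 2) :=
              Real.rpow_le_rpow (by linarith) hBv (by linarith)
        _ = _ := Real.mul_rpow (by norm_num) (by linarith)
      have t1 := mul_le_mul_of_nonneg_right h1 (mul_nonneg hv hv)
      have hvv : v * v ≤ d * d := by nlinarith
      have t2 : 2 ^ (p - 2) * (A + d) ^ (p - 2) * (v * v) ≤
          2 ^ (p - 2) * (A + d) ^ (p - 2) * (d * d) :=
        mul_le_mul_of_nonneg_left hvv
          (mul_nonneg (Real.rpow_nonneg (by norm_num : (0:ℝ) ≤ 2) (p - 2))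
            (Real.rpow_nonneg (by linarith : (0:ℝ) ≤ A + d) (p - 2)))
      have t3 := mul_le_mul_of_nonneg_right hCe hGd
      have t4 : 0 ≤ (3:ℝ) ^ |p - 2| * ((A + v) ^ (p - 2) * v * v) :=
        mul_nonneg (by linarith) hGv
      nlinarith [t1, t2, t3, t4]
  · have hCeq : (3:ℝ) ^ |p - 2| = 3 ^ (2 - p) := by
      rw [abs_of_nonpos (by linarith : p - 2 ≤ 0)]
      congr 1
      ring
    rw [hCeq]
    have hC30 : (0:ℝ) ≤ (3:ℝ) ^ (2 - p) := Real.rpow_nonneg (by norm_num) _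
    have hC3 : (3:ℝ) ^ (2 - p) * 3 ^ (p - 2) = 1 := by
      rw [← Real.rpow_add (by norm_num : (0:ℝ) < 3)]
      norm_num
    rcases le_or_gt (2 * d) (A + v) with hcase | hcase
    · have hAv : 0 < A + v := by linarith
      have hBv2 : (A + v) / 2 ≤ B + v := by linarith
      have h1 : (B + v) ^ (p - 2) ≤ ((A + v) / 2) ^ (p - 2) :=
        Real.rpow_le_rpow_of_nonpos (by linarith) hBv2 (by linarith)
      have h3 : ((A + v) / 2) ^ (p - 2) = 2 ^ (2 - p) * (A + v) ^ (p - 2) := by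
        rw [Real.div_rpow (by linarith) (by norm_num), show (2:ℝ) - p = -(p - 2) by ring,
          Real.rpow_neg (by norm_num : (0:ℝ) ≤ 2), inv_mul_eq_div]
      have hCe : (2:ℝ) ^ (2 - p) ≤ 3 ^ (2 - p) :=
        Real.rpow_le_rpow (by norm_num) (by norm_num) (by linarith)
      have h4 : (B + v) ^ (p - 2) ≤ 2 ^ (2 - p) * (A + v) ^ (p - 2) := by
        rw [← h3]; exact h1
      have t1 := mul_le_mul_of_nonneg_right h4 (mul_nonneg hv hv)
      have t2 := mul_le_mul_of_nonneg_right hCe hGv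
      have t3 : 0 ≤ (3:ℝ) ^ (2 - p) * ((A + d) ^ (p - 2) * d * d) := mul_nonneg hC30 hGd
      nlinarith [t1, t2, t3]
    · have hd0 : 0 < d := by linarith
      have h1 : (B + v) ^ (p - 2) ≤ v ^ (p - 2) :=
        Real.rpow_le_rpow_of_nonpos hv0 (by linarith) (by linarith)
      have ev2 : v ^ (2:ℝ) = v * v := by
        rw [show (2:ℝ) = ((2:ℕ):ℝ) by norm_num, Real.rpow_natCast]
        ring
      rcases le_or_gt v d with hvd | hvd
      · have hAd : A + d ≤ 3 * d := by linarith
        have h5 : (3 * d) ^ (p - 2) ≤ (A + d) ^ (p - 2) :=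
          Real.rpow_le_rpow_of_nonpos (by linarith) hAd (by linarith)
        have h6 : (3 * d) ^ (p - 2) = 3 ^ (p - 2) * d ^ (p - 2) :=
          Real.mul_rpow (by norm_num) hd0.le
        have ed2 : d ^ (2:ℝ) = d * d := by
          rw [show (2:ℝ) = ((2:ℕ):ℝ) by norm_num, Real.rpow_natCast]
          ring
        have h7 : v ^ (p - 2) * v * v ≤ d ^ (p - 2) * d * d := by
          have e1 : v ^ (p - 2) * v * v = v ^ p := by
            rw [mul_assoc, ← ev2, ← Real.rpow_add hv0]
            congr 1
            ring
          have e2 : d ^ (p - 2) * d * d = d ^ p := by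
            rw [mul_assoc, ← ed2, ← Real.rpow_add hd0]
            congr 1
            ring
          rw [e1, e2]
          exact Real.rpow_le_rpow hv0.le hvd (by linarith)
        have h8 : d ^ (p - 2) ≤ 3 ^ (2 - p) * (A + d) ^ (p - 2) := by
          calc d ^ (p - 2) = 3 ^ (2 - p) * (3 ^ (p - 2) * d ^ (p - 2)) := by
                rw [← mul_assoc, hC3, one_mul]
          _ ≤ 3 ^ (2 - p) * (A + d) ^ (p - 2) :=
                mul_le_mul_of_nonneg_left (h6 ▸ h5) hC30
        have t1 := mul_le_mul_of_nonneg_right h1 (mul_nonneg hv hv)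
        have t2 := mul_le_mul_of_nonneg_right h8 (mul_nonneg hd0.le hd0.le)
        have t3 : 0 ≤ (3:ℝ) ^ (2 - p) * ((A + v) ^ (p - 2) * v * v) := mul_nonneg hC30 hGv
        nlinarith [t1, t2, t3, h7]
      · have hAv3 : A + v ≤ 3 * v := by linarith
        have h5 : (3 * v) ^ (p - 2) ≤ (A + v) ^ (p - 2) :=
          Real.rpow_le_rpow_of_nonpos (by linarith) hAv3 (by linarith)
        have h6 : (3 * v) ^ (p - 2) = 3 ^ (p - 2) * v ^ (p - 2) :=
          Real.mul_rpow (by norm_num) hv0.le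
        have h8 : v ^ (p - 2) ≤ 3 ^ (2 - p) * (A + v) ^ (p - 2) := by
          calc v ^ (p - 2) = 3 ^ (2 - p) * (3 ^ (p - 2) * v ^ (p - 2)) := by
                rw [← mul_assoc, hC3, one_mul]
          _ ≤ 3 ^ (2 - p) * (A + v) ^ (p - 2) :=
                mul_le_mul_of_nonneg_left (h6 ▸ h5) hC30
        have t1 := mul_le_mul_of_nonneg_right h1 (mul_nonneg hv hv)
        have t2 := mul_le_mul_of_nonneg_right h8 (mul_nonneg hv hv)
        have t3 : 0 ≤ (3:ℝ) ^ (2 - p) * ((A + d) ^ (p - 2) * d * d) := mul_nonneg hC30 hGd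
        nlinarith [t1, t2, t3]

lemma c1_pos (hp : 1 < p) : 0 < min (1:ℝ) (2 ^ (2 - p)) / 4 := by
  have h1 : (0:ℝ) < 2 ^ (2 - p) := Real.rpow_pos_of_pos (by norm_num) _
  have h2 : (0:ℝ) < min (1:ℝ) (2 ^ (2 - p)) := lt_min one_pos h1
  linarith

lemma Phi_shift (hp : 1 < p) {A B d v : ℝ} (hA : 0 ≤ A) (hB : 0 ≤ B) (hd : 0 ≤ d)
    (hab : |A - B| ≤ d) (hv : 0 ≤ v) :
    Phi p B v ≤ ((3:ℝ) ^ |p - 2| / (min (1:ℝ) (2 ^ (2 - p)) / 4)) * (Phi p A v + Phi p A d) := by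
  have hc1 := c1_pos hp
  have hC : (0:ℝ) < (3:ℝ) ^ |p - 2| := Real.rpow_pos_of_pos (by norm_num) _
  have h1 : Phi p B v ≤ (B + v) ^ (p - 2) * v * v := Phi_upper hp hB hv
  have h2 := G_shift hp hA hB hd hab hv
  have h3 := Phi_lower hp hA hv
  have h4 := Phi_lower (t := d) hp hA hd
  rw [div_mul_eq_mul_div, le_div_iff₀ hc1]
  have e1 := mul_le_mul_of_nonneg_right h1 hc1.le
  have e2 := mul_le_mul_of_nonneg_right h2 hc1.le
  have e3 := mul_le_mul_of_nonneg_left h3 hC.le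
  have e4 := mul_le_mul_of_nonneg_left h4 hC.le
  nlinarith [e1, e2, e3, e4]

lemma scalar_main (hp : 1 < p) {ε : ℝ} (hε0 : 0 < ε) (hε1 : ε < 1) :
    ∃ c : ℝ, 0 < c ∧ ∀ A B d t : ℝ, 0 ≤ A → 0 ≤ B → 0 ≤ d → |A - B| ≤ d → 0 ≤ t →
      conjFun (Phi p A) t ≤ c * conjFun (Phi p B) t + ε * Phi p A d ∧
      conjFun (Phi p A) t ≤ c * conjFun (Phi p B) t + ε * Phi p B d := by
  obtain ⟨q, hqdef⟩ : ∃ q : ℝ, q = min p 2 := ⟨_, rfl⟩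
  have hq1 : 1 < q := hqdef ▸ lt_min hp one_lt_two
  obtain ⟨K, hKdef⟩ : ∃ K : ℝ,
      K = (3:ℝ) ^ |p - 2| / (min (1:ℝ) (2 ^ (2 - p)) / 4) := ⟨_, rfl⟩
  have hK0 : 0 < K := hKdef ▸
    div_pos (Real.rpow_pos_of_pos (by norm_num) _) (c1_pos hp)
  obtain ⟨M, hMdef⟩ : ∃ M : ℝ, M = 2 * K * K + K + 1 := ⟨_, rfl⟩
  have hM0 : 0 < M := by rw [hMdef]; nlinarith
  obtain ⟨θ, hθdef⟩ : ∃ θ : ℝ, θ = (ε / M) ^ (1 / q) := ⟨_, rfl⟩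
  have hεM : 0 < ε / M := div_pos hε0 hM0
  have hεM1 : ε / M ≤ 1 := by
    rw [div_le_one hM0, hMdef]
    nlinarith
  have hθ0 : 0 < θ := hθdef ▸ Real.rpow_pos_of_pos hεM _
  have hθ1 : θ ≤ 1 := hθdef ▸ Real.rpow_le_one hεM.le hεM1 (by positivity)
  have hθq : θ ^ q = ε / M := by
    rw [hθdef, ← Real.rpow_mul hεM.le, one_div, inv_mul_cancel₀ (by linarith : q ≠ 0),
      Real.rpow_one]
  have hinv1 : 1 ≤ θ⁻¹ := by
    nlinarith [mul_inv_cancel₀ (ne_of_gt hθ0), inv_nonneg.mpr hθ0.le]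
  refine ⟨θ⁻¹ ^ (q / (q - 1)), Real.rpow_pos_of_pos (inv_pos.mpr hθ0) _, ?_⟩
  intro A B d t hA hB hd hab ht
  have key : ∀ u, 0 ≤ u → t * u - Phi p A u ≤
      θ⁻¹ ^ (q / (q - 1)) * conjFun (Phi p B) t +
        (ε / M) * K * (Phi p A u + Phi p A d) - Phi p A u := by
    intro u hu
    have hty : (θ⁻¹ * t) * (θ * u) - Phi p B (θ * u) ≤ conjFun (Phi p B) (θ⁻¹ * t) :=
      conj_young hp hB (mul_nonneg (inv_nonneg.mpr hθ0.le) ht) (mul_nonneg hθ0.le hu)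
    have htu : (θ⁻¹ * t) * (θ * u) = t * u := by
      have h9 : θ⁻¹ * θ = 1 := inv_mul_cancel₀ (ne_of_gt hθ0)
      calc (θ⁻¹ * t) * (θ * u) = (θ⁻¹ * θ) * (t * u) := by ring
      _ = t * u := by rw [h9, one_mul]
    have hsc : conjFun (Phi p B) (θ⁻¹ * t) ≤ θ⁻¹ ^ (q / (q - 1)) * conjFun (Phi p B) t := by
      rw [hqdef]
      exact conj_scale hp hB ht hinv1
    have hsd : Phi p B (θ * u) ≤ θ ^ q * Phi p B u := by
      rw [hqdef]
      exact Phi_scale hp hB hu hθ0 hθ1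
    have hsh : Phi p B u ≤ K * (Phi p A u + Phi p A d) := by
      rw [hKdef]
      exact Phi_shift hp hA hB hd hab hu
    have hmul := mul_le_mul_of_nonneg_left hsh (Real.rpow_nonneg hθ0.le q)
    calc t * u - Phi p A u
        = ((θ⁻¹ * t) * (θ * u) - Phi p B (θ * u)) + Phi p B (θ * u) - Phi p A u := by
          rw [htu]; ring
    _ ≤ conjFun (Phi p B) (θ⁻¹ * t) + θ ^ q * Phi p B u - Phi p A u := by linarith
    _ ≤ θ⁻¹ ^ (q / (q - 1)) * conjFun (Phi p B) t +
          θ ^ q * (K * (Phi p A u + Phi p A d)) - Phi p A u := by linarith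
    _ = θ⁻¹ ^ (q / (q - 1)) * conjFun (Phi p B) t +
          (ε / M) * K * (Phi p A u + Phi p A d) - Phi p A u := by rw [hθq]; ring
  have hPhiAd : 0 ≤ Phi p A d := Phi_nonneg hA hd
  have hPhiBd : 0 ≤ Phi p B d := Phi_nonneg hB hd
  have hBA : |B - A| ≤ d := by rw [abs_sub_comm]; exact hab
  have hAd2 : Phi p A d ≤ 2 * K * Phi p B d := by
    have h := Phi_shift hp hB hA hd hBA hd
    rw [← hKdef] at h
    linarith
  have hx0 : 0 ≤ ε / M * K := le_of_lt (mul_pos hεM hK0)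
  have c1 : ε / M * K ≤ 1 := by
    rw [div_mul_eq_mul_div, div_le_one hM0, hMdef]
    nlinarith
  have c2 : ε / M * K ≤ ε := by
    rw [div_mul_eq_mul_div, div_le_iff₀ hM0, hMdef]
    nlinarith [mul_pos (mul_pos hε0 hK0) hK0, mul_pos hε0 hK0]
  have c3 : ε / M * K * (2 * K) ≤ ε := by
    rw [div_mul_eq_mul_div, div_mul_eq_mul_div, div_le_iff₀ hM0, hMdef]
    nlinarith [mul_pos (mul_pos hε0 hK0) hK0, mul_pos hε0 hK0]
  constructor
  · apply csSup_le ((Set.nonempty_Ici).image _)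
    rintro z ⟨u, hu, rfl⟩
    simp only [Set.mem_Ici] at hu
    show t * u - Phi p A u ≤ θ⁻¹ ^ (q / (q - 1)) * conjFun (Phi p B) t + ε * Phi p A d
    have hk := key u hu
    have hPA : 0 ≤ Phi p A u := Phi_nonneg hA hu
    have d1 := mul_le_mul_of_nonneg_right c1 hPA
    have d2 := mul_le_mul_of_nonneg_right c2 hPhiAd
    nlinarith [hk, d1, d2]
  · apply csSup_le ((Set.nonempty_Ici).image _)
    rintro z ⟨u, hu, rfl⟩
    simp only [Set.mem_Ici] at hu
    show t * u - Phi p A u ≤ θ⁻¹ ^ (q / (q - 1)) * conjFun (Phi p B) t + ε * Phi p B d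
    have hk := key u hu
    have hPA : 0 ≤ Phi p A u := Phi_nonneg hA hu
    have d1 := mul_le_mul_of_nonneg_right c1 hPA
    have d3 := mul_le_mul_of_nonneg_left hAd2 hx0
    have d4 := mul_le_mul_of_nonneg_right c3 hPhiBd
    nlinarith [hk, d1, d3, d4]

lemma phiShift_eq (p δ a : ℝ) : phiShift p δ a = Phi p (δ + a) := by
  funext t
  unfold phiShift Phi phiDeriv
  apply intervalIntegral.integral_congr_ae
  have hnull : ∀ᵐ x : ℝ, x ≠ -a := by
    rw [MeasureTheory.ae_iff]
    have h : {x : ℝ | ¬x ≠ -a} = {-a} := by ext x; simp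
    rw [h]
    exact measure_singleton _
  filter_upwards [hnull] with x hx _
  have hax : a + x ≠ 0 := fun h => hx (by linarith)
  have e : δ + (a + x) = δ + a + x := by ring
  rw [e]
  field_simp

noncomputable def toE (P : Matrix (Fin 3) (Fin 3) ℝ) : EuclideanSpace ℝ (Fin 3 × Fin 3) :=
  (WithLp.equiv 2 ((Fin 3 × Fin 3) → ℝ)).symm (fun ij => P ij.1 ij.2)

lemma toE_sub (P Q : Matrix (Fin 3) (Fin 3) ℝ) : toE (P - Q) = toE P - toE Q := by
  ext ij
  simp [toE, Matrix.sub_apply]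

lemma frob_toE (P : Matrix (Fin 3) (Fin 3) ℝ) : frob P = ‖toE P‖ := by
  rw [EuclideanSpace.norm_eq]
  unfold frob
  congr 1
  rw [Fintype.sum_prod_type]
  apply Finset.sum_congr rfl
  intro i _
  apply Finset.sum_congr rfl
  intro j _
  simp [toE, Real.norm_eq_abs, sq_abs]

lemma frob_nonneg (P : Matrix (Fin 3) (Fin 3) ℝ) : 0 ≤ frob P := Real.sqrt_nonneg _

lemma frob_sub_ineq (P Q : Matrix (Fin 3) (Fin 3) ℝ) :
    |frob P - frob Q| ≤ frob (P - Q) := by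
  rw [frob_toE, frob_toE, frob_toE, toE_sub]
  exact abs_norm_sub_norm_le _ _

end SCC

/-- Change of shift for conjugate functions: for `p ∈ (1,∞)` and every `ε ∈ (0,1)`
there exists `c_ε > 0` depending only on `p` and `ε` such that for all `δ ≥ 0`, all
3×3 matrices `P, Q` and all `t ≥ 0`:
`(φ_{|P|})*(t) ≤ c_ε·(φ_{|Q|})*(t) + ε·φ_{|P|}(|P−Q|)` and
`(φ_{|P|})*(t) ≤ c_ε·(φ_{|Q|})*(t) + ε·φ_{|Q|}(|P−Q|)`. -/
theorem shift_change_conj (p : ℝ) (hp : 1 < p) (ε : ℝ) (hε0 : 0 < ε) (hε1 : ε < 1) :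
    ∃ c : ℝ, 0 < c ∧
      ∀ δ : ℝ, 0 ≤ δ → ∀ P Q : Matrix (Fin 3) (Fin 3) ℝ, ∀ t : ℝ, 0 ≤ t →
        conjFun (phiShift p δ (frob P)) t
            ≤ c * conjFun (phiShift p δ (frob Q)) t
              + ε * phiShift p δ (frob P) (frob (P - Q)) ∧
        conjFun (phiShift p δ (frob P)) t
            ≤ c * conjFun (phiShift p δ (frob Q)) t
              + ε * phiShift p δ (frob Q) (frob (P - Q)) := by
  obtain ⟨c, hc, H⟩ := SCC.scalar_main hp hε0 hε1
  refine ⟨c, hc, ?_⟩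
  intro δ hδ P Q t ht
  rw [SCC.phiShift_eq p δ (frob P), SCC.phiShift_eq p δ (frob Q)]
  have habs : |(δ + frob P) - (δ + frob Q)| ≤ frob (P - Q) := by
    have h := SCC.frob_sub_ineq P Q
    have e : (δ + frob P) - (δ + frob Q) = frob P - frob Q := by ring
    rw [e]
    exact h
  exact H (δ + frob P) (δ + frob Q) (frob (P - Q)) t
    (by linarith [SCC.frob_nonneg P]) (by linarith [SCC.frob_nonneg Q])
    (SCC.frob_nonneg _) habs ht
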